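/- Let L ⊆ {0,1}* × {0,1}* be recognized by a Turing machine M that halts exactly on members of L (L is recursively enumerable). Define, for inputs x and y: a_x = |{y' : |y'| ≤ |x| and (x,y') ∈ L}| and b_y = |{x' : |x'| ≤ |y| and (x',y) ∈ L}|. Then the following procedure decides membership of (x,y) in L and always halts: if |x| ≤ |y|, dovetail M on all inputs (x, y') with |y'| ≤ |x| until exactly a_x of them have accepted, and accept iff (x,y) is among them; otherwise proceed symmetrically using b_y. In particular, every recursively enumerable language over pairs is BSM-computable with messages of length 2n+1 (the input plus the count) and a Carol that halts on all message pairs arising from actual inputs. -/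

import Mathlib

set_option maxHeartbeats 1000000

open Nat.Partrec (Code)
open Nat.Partrec.Code

namespace Stmt14Aux

/-- All binary strings of length at most `m`. -/
def strsUpTo : ℕ → List (List Bool)
  | 0 => [[]]
  | n + 1 => [] :: (strsUpTo n).flatMap (fun l => [true :: l, false :: l])

lemma mem_strsUpTo : ∀ (m : ℕ) (l : List Bool), l ∈ strsUpTo m ↔ l.length ≤ m
  | 0, l => by
    simp only [strsUpTo, List.mem_singleton, Nat.le_zero, List.length_eq_zero_iff]
  | m + 1, l => by
    cases l with
    | nil => simp [strsUpTo]
    | cons b t =>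
      simp only [strsUpTo, List.mem_cons, List.mem_flatMap]
      constructor
      · rintro (h | ⟨a, ha, hm⟩)
        · exact absurd h (by simp)
        · have ht : t = a := by
            simp only [List.mem_cons, List.mem_singleton, List.not_mem_nil, or_false] at hm
            rcases hm with h | h <;> exact (List.cons_eq_cons.mp h).2
          subst ht
          have := (mem_strsUpTo m t).1 ha
          simpa using Nat.succ_le_succ this
      · intro h
        right
        refine ⟨t, (mem_strsUpTo m t).2 (by simpa using h), ?_⟩
        cases b <;> simp

lemma nodup_strsUpTo : ∀ m, (strsUpTo m).Nodup
  | 0 => by simp [strsUpTo]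
  | m + 1 => by
    rw [strsUpTo]
    refine List.Nodup.cons ?_ ?_
    · intro h
      rcases List.mem_flatMap.1 h with ⟨a, _, hm⟩
      simp at hm
    · refine List.nodup_flatMap.2 ⟨fun a _ => by simp, ?_⟩
      refine (nodup_strsUpTo m).imp ?_
      intro a b hab l hl hl'
      simp only [List.mem_cons, List.mem_singleton, List.not_mem_nil, or_false] at hl hl'
      rcases hl with rfl | rfl <;> rcases hl' with h | h <;>
        exact hab (List.cons_eq_cons.mp h).2

lemma length_strsUpTo : ∀ m, (strsUpTo m).length = 2 ^ (m + 1) - 1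
  | 0 => by simp [strsUpTo]
  | m + 1 => by
    rw [strsUpTo, List.length_cons, List.length_flatMap]
    have key : ∀ L : List (List Bool),
        (List.map (fun a => [true :: a, false :: a].length) L).sum = 2 * L.length := by
      intro L
      induction L with
      | nil => rfl
      | cons a l ih =>
        simp [ih, Function.comp]
        omega
    rw [key, length_strsUpTo m]
    have h1 : 1 ≤ 2 ^ (m + 1) := Nat.one_le_two_pow
    have h2 : 2 ^ (m + 1 + 1) = 2 * 2 ^ (m + 1) := by ring
    omega

lemma primrec_strsUpTo : Primrec strsUpTo := by
  have hstep : Primrec₂ fun (_ : ℕ) (ih : List (List Bool)) =>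
      ([] : List Bool) :: ih.flatMap (fun l => [true :: l, false :: l]) := by
    have hg : Primrec₂ fun (_ : ℕ × List (List Bool)) (l : List Bool) =>
        ([true :: l, false :: l] : List (List Bool)) :=
      (Primrec.list_cons.comp
          (Primrec.list_cons.comp (Primrec.const true) Primrec.snd)
          (Primrec.list_cons.comp
            (Primrec.list_cons.comp (Primrec.const false) Primrec.snd)
            (Primrec.const []))).to₂
    exact (Primrec.list_cons.comp (Primrec.const ([] : List Bool))
      (Primrec.list_flatMap Primrec.snd hg)).to₂
  have := Primrec.nat_rec₁ (f := fun (_ : ℕ) ih =>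
      ([] : List Bool) :: ih.flatMap (fun l => [true :: l, false :: l]))
      [[]] hstep
  refine this.of_eq fun n => ?_
  induction n with
  | zero => rfl
  | succ n ih => simp only [strsUpTo, ← ih]

/-- Filtering a primrec list by a primrec boolean predicate is primrec. -/
lemma primrec_list_filter {α β : Type} [Primcodable α] [Primcodable β]
    {f : α → List β} {p : α → β → Bool} (hf : Primrec f) (hp : Primrec₂ p) :
    Primrec fun a => (f a).filter (p a) := by
  have hc : PrimrecPred fun z : α × β => p z.1 z.2 = true := by
    refine Primrec.primrecPred ((hp.comp Primrec.fst Primrec.snd).of_eq fun z => ?_)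
    cases hb : p z.1 z.2 <;> simp [hb]
  have hg : Primrec₂ fun a (b : β) => if p a b then some b else none :=
    Primrec.ite hc (Primrec.option_some.comp Primrec.snd) (Primrec.const none)
  refine (Primrec.listFilterMap hf hg).of_eq fun a => ?_
  induction f a with
  | nil => rfl
  | cons b l ih =>
    by_cases h : p a b = true <;>
      simp [List.filterMap_cons, List.filter_cons, h, ih]

/-- `Nat.card` of the subtype cut out by a length bound and a predicate equals
the length of the corresponding filtered list. -/
lemma card_eq (m : ℕ) (P : List Bool → Prop) [DecidablePred P] :
    Nat.card {l : List Bool // l.length ≤ m ∧ P l}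
      = ((strsUpTo m).filter fun l => decide (P l)).length := by
  have e : {l : List Bool // l.length ≤ m ∧ P l}
      ≃ {l // l ∈ (strsUpTo m).filter fun l => decide (P l)} :=
    Equiv.subtypeEquivRight fun l => by
      simp [List.mem_filter, mem_strsUpTo]
  rw [Nat.card_congr e]
  have hnd : ((strsUpTo m).filter fun l => decide (P l)).Nodup :=
    (nodup_strsUpTo m).filter _
  have hset : {l | l ∈ (strsUpTo m).filter fun l => decide (P l)}
      = (((strsUpTo m).filter fun l => decide (P l)).toFinset : Set (List Bool)) := by
    ext l; simp
  calc Nat.card {l // l ∈ (strsUpTo m).filter fun l => decide (P l)}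
      = Set.ncard {l | l ∈ (strsUpTo m).filter fun l => decide (P l)} :=
        Nat.card_coe_set_eq _
    _ = (((strsUpTo m).filter fun l => decide (P l)).toFinset).card := by
        rw [hset, Set.ncard_coe_finset]
    _ = ((strsUpTo m).filter fun l => decide (P l)).length :=
        List.toFinset_card_of_nodup hnd

lemma exists_stage {h : List Bool → ℕ → Bool} {P : List Bool → Prop}
    (hmono : ∀ l m n, m ≤ n → h l m = true → h l n = true)
    (hcomp : ∀ l, P l → ∃ n, h l n = true) :
    ∀ S : List (List Bool), ∃ N, ∀ l ∈ S, P l → h l N = true := by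
  intro S
  induction S with
  | nil => exact ⟨0, by simp⟩
  | cons a S ih =>
    obtain ⟨N, hN⟩ := ih
    by_cases hPa : P a
    · obtain ⟨n, hn⟩ := hcomp a hPa
      refine ⟨max n N, ?_⟩
      intro l hl hPl
      rcases List.mem_cons.1 hl with rfl | hl
      · exact hmono l n _ (le_max_left _ _) hn
      · exact hmono l N _ (le_max_right _ _) (hN l hl hPl)
    · refine ⟨N, ?_⟩
      intro l hl hPl
      rcases List.mem_cons.1 hl with rfl | hl
      · exact absurd hPl hPa
      · exact hN l hl hPl

/-- The dovetailing procedure: `rfind` the first stage where at least as many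
candidates have halted as the true count; at that stage the halted set is
exactly the set of members. -/
lemma dovetail_main {h : List Bool → ℕ → Bool} {P : List Bool → Prop} [DecidablePred P]
    (hmono : ∀ l m n, m ≤ n → h l m = true → h l n = true)
    (hsound : ∀ l n, h l n = true → P l)
    (hcomp : ∀ l, P l → ∃ n, h l n = true)
    (m : ℕ) (z : List Bool) (hz : z.length ≤ m) :
    ∃ n₀, n₀ ∈ Nat.rfind (fun n => Part.some
        (decide ((((strsUpTo m).filter fun l => decide (P l)).length)
          ≤ ((strsUpTo m).filter (h · n)).length)))
      ∧ (h z n₀ = true ↔ P z) := by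
  -- existence of a good stage
  obtain ⟨N, hN⟩ := exists_stage hmono hcomp (strsUpTo m)
  have hNeq : (strsUpTo m).filter (h · N) = (strsUpTo m).filter fun l => decide (P l) := by
    refine List.filter_congr ?_
    intro l hl
    by_cases hPl : P l
    · simp [hN l hl hPl, hPl]
    · have h1 : h l N = false := Bool.eq_false_iff.mpr fun hc => hPl (hsound l N hc)
      simp [hPl, h1]
  -- the rfind predicate holds at N, so rfind is defined
  have hdom : (Nat.rfind (fun n => Part.some
      (decide ((((strsUpTo m).filter fun l => decide (P l)).length)
        ≤ ((strsUpTo m).filter (h · n)).length)))).Dom := by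
    apply Nat.rfind_dom.2
    refine ⟨N, ?_, fun {_} _ => trivial⟩
    simp [hNeq]
  obtain ⟨n₀, hn₀⟩ := Part.dom_iff_mem.1 hdom
  refine ⟨n₀, hn₀, ?_⟩
  have hspec := Nat.rfind_spec hn₀
  simp only [Part.mem_some_iff] at hspec
  have hle : (((strsUpTo m).filter fun l => decide (P l)).length)
      ≤ ((strsUpTo m).filter (h · n₀)).length :=
    of_decide_eq_true hspec.symm
  -- the halted list is a sublist of the member list
  have hsub : List.Sublist ((strsUpTo m).filter (h · n₀))
      ((strsUpTo m).filter fun l => decide (P l)) :=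
    List.monotone_filter_right _ (fun l hl => decide_eq_true (hsound l n₀ hl))
  have heq : (strsUpTo m).filter (h · n₀) = (strsUpTo m).filter fun l => decide (P l) :=
    hsub.eq_of_length_le hle
  constructor
  · intro hh
    have : z ∈ (strsUpTo m).filter (h · n₀) :=
      List.mem_filter.2 ⟨(mem_strsUpTo m z).2 hz, hh⟩
    rw [heq] at this
    simpa using (List.mem_filter.1 this).2
  · intro hPz
    have : z ∈ (strsUpTo m).filter fun l => decide (P l) :=
      List.mem_filter.2 ⟨(mem_strsUpTo m z).2 hz, decide_eq_true hPz⟩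
    rw [← heq] at this
    exact (List.mem_filter.1 this).2

end Stmt14Aux

open Stmt14Aux Classical in
/-- Let `L` be a recursively enumerable language of pairs (the domain
of a partial computable function `f`). Then `L` is BSM-computable: Alice sends
`A(x) = (x, a_x)` where `a_x` is the number of `y'` with `|y'| ≤ |x|` and
`(x,y') ∈ L` (this count fits in `|x|+1` bits, making the message `2|x|+1` bits),
Bob symmetrically sends `B(y) = (y, b_y)`, and there is a partial computable Carol
(the dovetailing procedure) that halts on every message pair arising from actual
inputs and correctly decides whether `(x,y) ∈ L`. -/
theorem stmt14 (L : List Bool → List Bool → Prop)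
    (f : List Bool × List Bool →. Unit) (hf : Partrec f)
    (hfL : ∀ p : List Bool × List Bool, (f p).Dom ↔ L p.1 p.2) :
    ∃ (A B : List Bool → List Bool × ℕ)
      (carol : (List Bool × ℕ) × (List Bool × ℕ) →. Bool),
      Partrec carol ∧
      (∀ x, A x = (x, Nat.card {y' : List Bool // y'.length ≤ x.length ∧ L x y'})) ∧
      (∀ y, B y = (y, Nat.card {x' : List Bool // x'.length ≤ y.length ∧ L x' y})) ∧
      (∀ x, (A x).2 < 2 ^ (x.length + 1)) ∧
      (∀ y, (B y).2 < 2 ^ (y.length + 1)) ∧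
      (∀ x y, ∃ b : Bool, carol (A x, B y) = Part.some b ∧ (b = true ↔ L x y)) := by
  classical
  obtain ⟨c, hc⟩ := Code.exists_code.1 hf
  -- the step-bounded halting predicate
  set halts : List Bool × List Bool → ℕ → Bool :=
    fun p n => (Code.evaln n c (Encodable.encode p)).isSome with hhalts
  have hev : ∀ p : List Bool × List Bool, (eval c (Encodable.encode p)).Dom ↔ L p.1 p.2 := by
    intro p
    have h1 : eval c (Encodable.encode p) = (f p).map Encodable.encode := by
      rw [hc]
      simp [Encodable.encodek]
    rw [h1]
    exact hfL p
  have hsound : ∀ (p : List Bool × List Bool) n, halts p n = true → L p.1 p.2 := by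
    intro p n h
    rw [hhalts, Option.isSome_iff_exists] at h
    obtain ⟨v, hv⟩ := h
    exact (hev p).1 (Part.dom_iff_mem.2 ⟨v, Code.evaln_sound hv⟩)
  have hcompl : ∀ p : List Bool × List Bool, L p.1 p.2 → ∃ n, halts p n = true := by
    intro p h
    obtain ⟨v, hv⟩ := Part.dom_iff_mem.1 ((hev p).2 h)
    obtain ⟨k, hk⟩ := Code.evaln_complete.1 hv
    exact ⟨k, by rw [hhalts]; exact Option.isSome_iff_exists.2 ⟨v, hk⟩⟩
  have hmono : ∀ (p : List Bool × List Bool) m n, m ≤ n → halts p m = true → halts p n = true := by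
    intro p m n hmn h
    rw [hhalts, Option.isSome_iff_exists] at h ⊢
    obtain ⟨v, hv⟩ := h
    exact ⟨v, Code.evaln_mono hmn hv⟩
  have hhaltsPrim : Primrec₂ halts := by
    rw [hhalts]
    exact (Primrec.option_isSome.comp
      (Code.primrec_evaln.comp
        ((Primrec.snd.pair (Primrec.const c)).pair
          (Primrec.encode.comp Primrec.fst)))).to₂
  -- the rfind predicate used by carol
  set K : (List Bool × ℕ) × (List Bool × ℕ) → ℕ → Bool := fun q n =>
    if q.1.1.length ≤ q.2.1.length then
      decide (q.2.2 ≤ ((strsUpTo q.2.1.length).filter fun x' => halts (x', q.2.1) n).length)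
    else
      decide (q.1.2 ≤ ((strsUpTo q.1.1.length).filter fun y' => halts (q.1.1, y') n).length)
    with hK
  set carol : (List Bool × ℕ) × (List Bool × ℕ) →. Bool := fun q =>
    (Nat.rfind fun n => Part.some (K q n)).map fun n => halts (q.1.1, q.2.1) n with hcarol
  refine ⟨fun x => (x, Nat.card {y' : List Bool // y'.length ≤ x.length ∧ L x y'}),
    fun y => (y, Nat.card {x' : List Bool // x'.length ≤ y.length ∧ L x' y}),
    carol, ?_, fun _ => rfl, fun _ => rfl, ?_, ?_, ?_⟩
  · -- Partrec carol
    have hKcomp : Computable₂ K := by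
      rw [hK]
      have hx : Primrec fun a : ((List Bool × ℕ) × (List Bool × ℕ)) × ℕ => a.1.1.1 :=
        Primrec.fst.comp (Primrec.fst.comp Primrec.fst)
      have hy : Primrec fun a : ((List Bool × ℕ) × (List Bool × ℕ)) × ℕ => a.1.2.1 :=
        Primrec.fst.comp (Primrec.snd.comp Primrec.fst)
      have ha : Primrec fun a : ((List Bool × ℕ) × (List Bool × ℕ)) × ℕ => a.1.1.2 :=
        Primrec.snd.comp (Primrec.fst.comp Primrec.fst)
      have hb : Primrec fun a : ((List Bool × ℕ) × (List Bool × ℕ)) × ℕ => a.1.2.2 :=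
        Primrec.snd.comp (Primrec.snd.comp Primrec.fst)
      have hn : Primrec fun a : ((List Bool × ℕ) × (List Bool × ℕ)) × ℕ => a.2 :=
        Primrec.snd
      have hcnt2 : Primrec fun a : ((List Bool × ℕ) × (List Bool × ℕ)) × ℕ =>
          ((strsUpTo a.1.2.1.length).filter fun x' => halts (x', a.1.2.1) a.2).length :=
        Primrec.list_length.comp
          (primrec_list_filter (primrec_strsUpTo.comp (Primrec.list_length.comp hy))
            ((hhaltsPrim.comp
                (Primrec.snd.pair (hy.comp Primrec.fst))
                (hn.comp Primrec.fst)).to₂))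
      have hcnt1 : Primrec fun a : ((List Bool × ℕ) × (List Bool × ℕ)) × ℕ =>
          ((strsUpTo a.1.1.1.length).filter fun y' => halts (a.1.1.1, y') a.2).length :=
        Primrec.list_length.comp
          (primrec_list_filter (primrec_strsUpTo.comp (Primrec.list_length.comp hx))
            ((hhaltsPrim.comp
                ((hx.comp Primrec.fst).pair Primrec.snd)
                (hn.comp Primrec.fst)).to₂))
      have : Primrec fun a : ((List Bool × ℕ) × (List Bool × ℕ)) × ℕ => K a.1 a.2 := by
        refine Primrec.ite ?_ ?_ ?_
        · exact Primrec.nat_le.comp (Primrec.list_length.comp hx) (Primrec.list_length.comp hy)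
        · exact (Primrec.nat_le.comp hb hcnt2).decide
        · exact (Primrec.nat_le.comp ha hcnt1).decide
      exact (this.to₂).to_comp
    have hKpart : Partrec₂ fun (q : (List Bool × ℕ) × (List Bool × ℕ)) (n : ℕ) =>
        Part.some (K q n) :=
      (hKcomp.partrec₂ : Partrec _).of_eq fun _ => rfl
    have hG : Computable₂ fun (q : (List Bool × ℕ) × (List Bool × ℕ)) (n : ℕ) =>
        halts (q.1.1, q.2.1) n :=
      (hhaltsPrim.to_comp.comp
        (((Computable.fst.comp Computable.fst).pair
          (Computable.fst.comp Computable.snd)).comp Computable.fst)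
        Computable.snd).to₂
    rw [hcarol]
    exact (Partrec.rfind hKpart).map hG
  · -- bound on a_x
    intro x
    show Nat.card {y' : List Bool // y'.length ≤ x.length ∧ L x y'} < 2 ^ (x.length + 1)
    rw [card_eq x.length (fun y' => L x y')]
    calc ((strsUpTo x.length).filter fun l => decide (L x l)).length
        ≤ (strsUpTo x.length).length := List.length_filter_le _ _
      _ = 2 ^ (x.length + 1) - 1 := length_strsUpTo _
      _ < 2 ^ (x.length + 1) := Nat.sub_lt (Nat.pos_of_ne_zero (by positivity)) one_pos
  · -- bound on b_y
    intro y
    show Nat.card {x' : List Bool // x'.length ≤ y.length ∧ L x' y} < 2 ^ (y.length + 1)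
    rw [card_eq y.length (fun x' => L x' y)]
    calc ((strsUpTo y.length).filter fun l => decide (L l y)).length
        ≤ (strsUpTo y.length).length := List.length_filter_le _ _
      _ = 2 ^ (y.length + 1) - 1 := length_strsUpTo _
      _ < 2 ^ (y.length + 1) := Nat.sub_lt (Nat.pos_of_ne_zero (by positivity)) one_pos
  · -- correctness
    intro x y
    by_cases hxy : x.length ≤ y.length
    · -- use Bob's count: candidates x' with |x'| ≤ |y|
      obtain ⟨n₀, hn₀, hiff⟩ := dovetail_main (h := fun x' n => halts (x', y) n)
        (P := fun x' => L x' y)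
        (fun l m n hmn h => hmono (l, y) m n hmn h)
        (fun l n h => hsound (l, y) n h)
        (fun l h => hcompl (l, y) h) y.length x hxy
      have hpred : (fun n => Part.some (K ((x,
          Nat.card {y' : List Bool // y'.length ≤ x.length ∧ L x y'}),
          (y, Nat.card {x' : List Bool // x'.length ≤ y.length ∧ L x' y})) n))
          = fun n => Part.some
            (decide ((((strsUpTo y.length).filter fun l => decide (L l y)).length)
              ≤ ((strsUpTo y.length).filter fun x' => halts (x', y) n).length)) := by
        funext n
        rw [hK]
        simp only [if_pos hxy]
        rw [card_eq y.length (fun x' => L x' y)]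
      have hrfind : Nat.rfind (fun n => Part.some (K ((x,
          Nat.card {y' : List Bool // y'.length ≤ x.length ∧ L x y'}),
          (y, Nat.card {x' : List Bool // x'.length ≤ y.length ∧ L x' y})) n))
          = Part.some n₀ := by
        rw [hpred]
        exact Part.eq_some_iff.2 hn₀
      refine ⟨halts (x, y) n₀, ?_, hiff⟩
      rw [hcarol]
      simp only [hrfind, Part.map_some]
    · -- use Alice's count: candidates y' with |y'| ≤ |x|
      have hyx : y.length ≤ x.length := le_of_not_ge hxy
      obtain ⟨n₀, hn₀, hiff⟩ := dovetail_main (h := fun y' n => halts ((x, y') : _ × _) n)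
        (P := fun y' => L x y')
        (fun l m n hmn h => hmono (x, l) m n hmn h)
        (fun l n h => hsound (x, l) n h)
        (fun l h => hcompl (x, l) h) x.length y hyx
      have hpred : (fun n => Part.some (K ((x,
          Nat.card {y' : List Bool // y'.length ≤ x.length ∧ L x y'}),
          (y, Nat.card {x' : List Bool // x'.length ≤ y.length ∧ L x' y})) n))
          = fun n => Part.some
            (decide ((((strsUpTo x.length).filter fun l => decide (L x l)).length)
              ≤ ((strsUpTo x.length).filter fun y' => halts (x, y') n).length)) := by
        funext n
        rw [hK]
        simp only [if_neg hxy]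
        rw [card_eq x.length (fun y' => L x y')]
      have hrfind : Nat.rfind (fun n => Part.some (K ((x,
          Nat.card {y' : List Bool // y'.length ≤ x.length ∧ L x y'}),
          (y, Nat.card {x' : List Bool // x'.length ≤ y.length ∧ L x' y})) n))
          = Part.some n₀ := by
        rw [hpred]
        exact Part.eq_some_iff.2 hn₀
      refine ⟨halts (x, y) n₀, ?_, hiff⟩
      rw [hcarol]
      simp only [hrfind, Part.map_some]
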